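/- Let A be an n×n complex matrix such that every eigenvalue μ ∈ spectrum ℂ A satisfies Re μ ≠ 0, let U be a unitary n×n matrix, let η ∈ {1, −1}, and suppose A = η • (U ⬝ conj(A) ⬝ Uᴴ), where conj denotes entrywise complex conjugation. Let F be a spectral sign of A, i.e. F⬝A = A⬝F, F⬝F = 1, and for every eigenvalue μ ∈ spectrum ℂ A and every v ∈ ℂⁿ with ((A − μ•1)^n) *ᵥ v = 0 one has F *ᵥ v = v if Re μ > 0 and F *ᵥ v = −v if Re μ < 0. Then F = η • (U ⬝ conj(F) ⬝ Uᴴ). -/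

import Mathlib

open Matrix

private lemma conj_mulVec_star {n : ℕ} (M : Matrix (Fin n) (Fin n) ℂ) (x : Fin n → ℂ) :
    (M.map (starRingEnd ℂ)) *ᵥ (star x) = star (M *ᵥ x) := by
  ext i
  simp only [Matrix.mulVec, dotProduct, Pi.star_apply, Matrix.map_apply, map_sum,
    _root_.map_mul, Complex.star_def]

private lemma conj_pow_aux {n : ℕ} (U B : Matrix (Fin n) (Fin n) ℂ)
    (h1 : U * Uᴴ = 1) (h2 : Uᴴ * U = 1) (k : ℕ) :
    (U * B * Uᴴ) ^ k = U * B ^ k * Uᴴ := by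
  induction k with
  | zero => simp [h1]
  | succ k ih =>
    rw [pow_succ, pow_succ, ih]
    rw [show U * B ^ k * Uᴴ * (U * B * Uᴴ) = U * B ^ k * (Uᴴ * U) * B * Uᴴ by
      noncomm_ring, h2]
    noncomm_ring

private lemma mem_spectrum_of_genEig {n : ℕ} (A : Matrix (Fin n) (Fin n) ℂ) (μ : ℂ)
    (v : Fin n → ℂ) (hv : ((A - μ • 1) ^ n) *ᵥ v = 0) (hv0 : v ≠ 0) :
    μ ∈ spectrum ℂ A := by
  by_contra h
  rw [spectrum.notMem_iff] at h
  rw [Algebra.algebraMap_eq_smul_one] at h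
  have h' : IsUnit (A - μ • 1) := by
    have := h.neg
    rwa [neg_sub] at this
  obtain ⟨u, hu⟩ := h'.pow n
  apply hv0
  have hvv : (↑u⁻¹ : Matrix (Fin n) (Fin n) ℂ) *ᵥ ((↑u : Matrix (Fin n) (Fin n) ℂ) *ᵥ v) = v := by
    rw [Matrix.mulVec_mulVec, Units.inv_mul, Matrix.one_mulVec]
  rw [← hvv, hu, hv, Matrix.mulVec_zero]

private lemma map_conj_pow {n : ℕ} (M : Matrix (Fin n) (Fin n) ℂ) (k : ℕ) :
    (M.map (starRingEnd ℂ)) ^ k = (M ^ k).map (starRingEnd ℂ) := by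
  induction k with
  | zero => simp [Matrix.map_one]
  | succ k ih => rw [pow_succ, pow_succ, ih, Matrix.map_mul]

theorem stmt_11 {n : ℕ} (A U F : Matrix (Fin n) (Fin n) ℂ) (η : ℂ)
    (hA : ∀ μ ∈ spectrum ℂ A, μ.re ≠ 0)
    (hU : U ∈ Matrix.unitaryGroup (Fin n) ℂ)
    (hη : η = 1 ∨ η = -1)
    (hsym : A = η • (U * A.map (starRingEnd ℂ) * Uᴴ))
    (hFA : F * A = A * F) (hFF : F * F = 1)
    (hF : ∀ μ ∈ spectrum ℂ A, ∀ v : Fin n → ℂ, ((A - μ • 1) ^ n) *ᵥ v = 0 →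
      (0 < μ.re → F *ᵥ v = v) ∧ (μ.re < 0 → F *ᵥ v = -v)) :
    F = η • (U * F.map (starRingEnd ℂ) * Uᴴ) := by
  have hUU : U * Uᴴ = 1 := Matrix.mem_unitaryGroup_iff.mp hU
  have hUU' : Uᴴ * U = 1 := Matrix.mem_unitaryGroup_iff'.mp hU
  have hη2 : η * η = 1 := by rcases hη with h | h <;> simp [h]
  have hηc : starRingEnd ℂ η = η := by rcases hη with h | h <;> simp [h]
  set c := starRingEnd ℂ
  set G := η • (U * F.map c * Uᴴ) with hG
  -- key pointwise statement
  have key : ∀ μ : ℂ, ∀ v : Fin n → ℂ, ((A - μ • 1) ^ n) *ᵥ v = 0 →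
      F *ᵥ v = G *ᵥ v := by
    intro μ v hv
    by_cases hv0 : v = 0
    · simp [hv0]
    have hμA : μ ∈ spectrum ℂ A := mem_spectrum_of_genEig A μ v hv hv0
    -- the conjugated vector
    set w : Fin n → ℂ := star (Uᴴ *ᵥ v) with hw
    have hsw : star w = Uᴴ *ᵥ v := by rw [hw, star_star]
    have hw0 : w ≠ 0 := by
      intro h
      apply hv0
      have h2 : Uᴴ *ᵥ v = 0 := by rw [← hsw, h, star_zero]
      have : (U * Uᴴ) *ᵥ v = 0 := by
        rw [← Matrix.mulVec_mulVec, h2, Matrix.mulVec_zero]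
      rwa [hUU, Matrix.one_mulVec] at this
    -- conjugation relation on matrices
    set μ' : ℂ := η * c μ with hμ'
    have hAdecomp : A - μ • 1 = U * (η • ((A - μ' • 1).map c)) * Uᴴ := by
      have hmap : (A - μ' • 1).map c = A.map c - (η * μ) • 1 := by
        have h1 : (μ' • (1 : Matrix (Fin n) (Fin n) ℂ)).map c
            = (η * μ) • (1 : Matrix (Fin n) (Fin n) ℂ) := by
          ext i j
          rcases eq_or_ne i j with rfl | hij
          · simp only [Matrix.map_apply, Matrix.smul_apply, Matrix.one_apply_eq,
              smul_eq_mul, mul_one, hμ']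
            rw [_root_.map_mul, hηc]
            simp [c]
          · simp [Matrix.map_apply, Matrix.one_apply_ne hij]
        rw [Matrix.map_sub _ (fun a b => map_sub c a b), h1]
      rw [hmap, smul_sub, Matrix.mul_sub, Matrix.sub_mul]
      congr 1
      · conv_lhs => rw [hsym]
        rw [Matrix.mul_smul, Matrix.smul_mul]
      · rw [smul_smul, ← mul_assoc, hη2, one_mul, Matrix.mul_smul, Matrix.mul_one,
          Matrix.smul_mul, hUU]
    -- w is a generalized eigenvector for μ'
    have hw_gen : ((A - μ' • 1) ^ n) *ᵥ w = 0 := by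
      have h1 : (A - μ • 1) ^ n = U * (η ^ n • ((A - μ' • 1).map c) ^ n) * Uᴴ := by
        rw [hAdecomp, conj_pow_aux U _ hUU hUU', smul_pow]
      have h2 : (U * (η ^ n • ((A - μ' • 1).map c) ^ n) * Uᴴ) *ᵥ v = 0 := by
        rw [← h1]; exact hv
      have hηn : η ^ n ≠ 0 := by
        rcases hη with h | h <;> simp [h]
      have h3 : (((A - μ' • 1).map c) ^ n) *ᵥ (Uᴴ *ᵥ v) = 0 := by
        have h4 : (η ^ n • ((A - μ' • 1).map c) ^ n) *ᵥ (Uᴴ *ᵥ v) = 0 := by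
          have h5 : Uᴴ *ᵥ ((U * (η ^ n • ((A - μ' • 1).map c) ^ n) * Uᴴ) *ᵥ v) = 0 := by
            rw [h2, Matrix.mulVec_zero]
          rw [Matrix.mulVec_mulVec, show Uᴴ * (U * (η ^ n • ((A - μ' • 1).map c) ^ n) * Uᴴ)
            = Uᴴ * U * (η ^ n • ((A - μ' • 1).map c) ^ n) * Uᴴ by noncomm_ring, hUU',
            Matrix.one_mul, ← Matrix.mulVec_mulVec] at h5
          exact h5
        rw [Matrix.smul_mulVec] at h4
        exact (smul_eq_zero.mp h4).resolve_left hηn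
      rw [map_conj_pow] at h3
      rw [← hsw] at h3
      rw [conj_mulVec_star] at h3
      have := congrArg star h3
      rwa [star_star, star_zero] at this
    have hμ'A : μ' ∈ spectrum ℂ A := mem_spectrum_of_genEig A μ' w hw_gen hw0
    -- sign analysis
    have hre : μ.re ≠ 0 := hA μ hμA
    -- F *ᵥ v = s • v and F *ᵥ w = t • w with η * t = s
    obtain ⟨s, t, hst, hs1, hFv, hFw⟩ :
        ∃ s t : ℂ, η * t = s ∧ c t = t ∧ F *ᵥ v = s • v ∧ F *ᵥ w = t • w := by
      have hre' : μ'.re = η.re * μ.re := by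
        rcases hη with h | h <;> simp [hμ', h, c, Complex.conj_re]
      rcases hre.lt_or_gt with hneg | hpos
      · have hFv := (hF μ hμA v hv).2 hneg
        rcases hη with h | h
        · have : μ'.re < 0 := by rw [hre']; simpa [h] using hneg
          have hFw := (hF μ' hμ'A w hw_gen).2 this
          exact ⟨-1, -1, by simp [h], by simp, by simpa using hFv, by simpa using hFw⟩
        · have hmm : μ'.re = -μ.re := by rw [hre', h]; simp
          have : 0 < μ'.re := by rw [hmm]; linarith
          have hFw := (hF μ' hμ'A w hw_gen).1 this
          exact ⟨-1, 1, by simp [h], by simp, by simpa using hFv, by simpa using hFw⟩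
      · have hFv := (hF μ hμA v hv).1 hpos
        rcases hη with h | h
        · have : 0 < μ'.re := by rw [hre']; simpa [h] using hpos
          have hFw := (hF μ' hμ'A w hw_gen).1 this
          exact ⟨1, 1, by simp [h], by simp, by simpa using hFv, by simpa using hFw⟩
        · have hmm : μ'.re = -μ.re := by rw [hre', h]; simp
          have : μ'.re < 0 := by rw [hmm]; linarith
          have hFw := (hF μ' hμ'A w hw_gen).2 this
          exact ⟨1, -1, by simp [h], by simp, by simpa using hFv, by simpa using hFw⟩
    -- compute G *ᵥ v
    have hGv : G *ᵥ v = (η * t) • v := by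
      rw [hG, Matrix.smul_mulVec, ← Matrix.mulVec_mulVec, ← Matrix.mulVec_mulVec,
        ← hsw, conj_mulVec_star, hFw]
      have hstar_t : (star t : ℂ) = t := hs1
      have : star (t • w) = t • (Uᴴ *ᵥ v) := by
        rw [star_smul, hsw, hstar_t]
      rw [this, Matrix.mulVec_smul, Matrix.mulVec_mulVec, hUU, Matrix.one_mulVec, smul_smul]
    rw [hFv, hGv, hst]
  -- conclude F = G via spanning of generalized eigenspaces
  have hall : ∀ v : Fin n → ℂ, F *ᵥ v = G *ᵥ v := by
    have htop := Module.End.iSup_maxGenEigenspace_eq_top (Matrix.toLinAlgEquiv' A)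
    intro v
    have hv : v ∈ (⊤ : Submodule ℂ (Fin n → ℂ)) := Submodule.mem_top
    rw [← htop] at hv
    have hker : ∀ μ : ℂ, Module.End.maxGenEigenspace (Matrix.toLinAlgEquiv' A) μ ≤
        LinearMap.ker (Matrix.toLinAlgEquiv' (F - G)) := by
      intro μ x hx
      obtain ⟨k, hk⟩ := (Module.End.mem_maxGenEigenspace _ _ _).mp hx
      have hx1 : x ∈ Module.End.genEigenspace (Matrix.toLinAlgEquiv' A) μ (⊤ : ℕ∞) :=
        Module.End.mem_genEigenspace_top.mpr ⟨k, by simpa using hk⟩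
      have hx2 := Module.End.genEigenspace_le_genEigenspace_finrank
        (Matrix.toLinAlgEquiv' A) μ ⊤ hx1
      rw [Module.finrank_fin_fun, Module.End.mem_genEigenspace_nat, LinearMap.mem_ker] at hx2
      have heq : (Matrix.toLinAlgEquiv' A - μ • 1) ^ n
          = Matrix.toLinAlgEquiv' ((A - μ • 1) ^ n) := by
        rw [map_pow, map_sub, _root_.map_smul, _root_.map_one]
      rw [heq, Matrix.toLinAlgEquiv'_apply] at hx2
      have := key μ x hx2
      rw [LinearMap.mem_ker, Matrix.toLinAlgEquiv'_apply, Matrix.sub_mulVec, this, sub_self]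
    have : v ∈ LinearMap.ker (Matrix.toLinAlgEquiv' (F - G)) := by
      refine Submodule.iSup_induction
        (motive := fun y => y ∈ LinearMap.ker (Matrix.toLinAlgEquiv' (F - G)))
        _ hv (fun μ x hx => hker μ hx) (Submodule.zero_mem _)
        (fun x y hx hy => Submodule.add_mem _ hx hy)
    rw [LinearMap.mem_ker, Matrix.toLinAlgEquiv'_apply, Matrix.sub_mulVec, sub_eq_zero] at this
    exact this
  have : Matrix.toLinAlgEquiv' F = Matrix.toLinAlgEquiv' G := by
    apply LinearMap.ext
    intro v
    rw [Matrix.toLinAlgEquiv'_apply, Matrix.toLinAlgEquiv'_apply]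
    exact hall v
  exact Matrix.toLinAlgEquiv'.injective this
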